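/- The set of feasible pairs (μ, ν) for the linear program P is compact in the topology of weak convergence of measures: every sequence of feasible pairs (μ_n, ν_n) has a subsequence (μ_{n_k}, ν_{n_k}) and a feasible pair (μ, ν) such that ∫ φ dμ_{n_k} → ∫ φ dμ for every continuous φ : S → ℝ and ∫ ψ dν_{n_k} → ∫ ψ dν for every continuous ψ : K → ℝ. -/

import Mathlib

noncomputable section
open MeasureTheory Set Topology Filter

section Riesz

variable {X : Type*} [TopologicalSpace X] [CompactSpace X] [T2Space X]

/-- Test functions: continuous `[0,1]`-valued, equal to `1` on `K`. -/
def AA (K : Set X) : Set C(X, ℝ) :=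
  {f | (∀ x, f x ∈ Icc (0:ℝ) 1) ∧ ∀ x ∈ K, f x = 1}

lemma one_mem_AA (K : Set X) : (1 : C(X, ℝ)) ∈ AA K :=
  ⟨fun _ => ⟨zero_le_one, le_refl 1⟩, fun _ _ => rfl⟩

variable (L : C(X, ℝ) → ℝ)

/-- The content value of a compact set. -/
def lam (K : Set X) : ℝ := sInf (L '' AA K)

lemma AAbounds {K : Set X} {f : C(X, ℝ)} (h : f ∈ AA K) : ∀ x, f x ∈ Icc (0:ℝ) 1 := h.1
lemma AAone {K : Set X} {f : C(X, ℝ)} (h : f ∈ AA K) : ∀ x ∈ K, f x = 1 := h.2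

section lemmas
variable (hadd : ∀ f g, L (f + g) = L f + L g)
    (hpos : ∀ f : C(X, ℝ), (∀ x, 0 ≤ f x) → 0 ≤ L f)
include hadd hpos
set_option linter.unusedSectionVars false

lemma L_zero : L 0 = 0 := by
  have := hadd 0 0
  simp only [add_zero] at this
  linarith

lemma L_mono {f g : C(X, ℝ)} (h : ∀ x, f x ≤ g x) : L f ≤ L g := by
  have h1 : L g = L f + L (g - f) := by
    have := hadd f (g - f); simpa using this
  have h2 : 0 ≤ L (g - f) := hpos _ (fun x => by simpa using sub_nonneg.2 (h x))
  linarith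

lemma bddBelow_AA (K : Set X) : BddBelow (L '' AA K) := by
  refine ⟨0, ?_⟩
  rintro y ⟨f, hf, rfl⟩
  exact hpos f (fun x => (AAbounds hf x).1)

lemma lam_le {K : Set X} {f : C(X, ℝ)} (hf : f ∈ AA K) : lam L K ≤ L f :=
  csInf_le (bddBelow_AA L hadd hpos _) ⟨f, hf, rfl⟩

lemma le_lam {K : Set X} {c : ℝ} (h : ∀ f ∈ AA K, c ≤ L f) : c ≤ lam L K := by
  refine le_csInf ⟨L 1, ⟨1, one_mem_AA K, rfl⟩⟩ ?_
  rintro y ⟨f, hf, rfl⟩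
  exact h f hf

lemma lam_nonneg (K : Set X) : 0 ≤ lam L K :=
  le_lam L hadd hpos (fun f hf => hpos f (fun x => (AAbounds hf x).1))

lemma lam_mono {K₁ K₂ : Set X} (h : K₁ ⊆ K₂) : lam L K₁ ≤ lam L K₂ := by
  refine le_lam L hadd hpos (fun f hf => lam_le L hadd hpos ?_)
  exact ⟨hf.1, fun x hx => AAone hf x (h hx)⟩

lemma lam_union_le (K₁ K₂ : Set X) :
    lam L (K₁ ∪ K₂) ≤ lam L K₁ + lam L K₂ := by
  have key : ∀ f₁ ∈ AA K₁, ∀ f₂ ∈ AA K₂, lam L (K₁ ∪ K₂) ≤ L f₁ + L f₂ := by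
    intro f₁ hf₁ f₂ hf₂
    set g : C(X, ℝ) := ⟨fun x => min (f₁ x + f₂ x) 1,
      (f₁.continuous.add f₂.continuous).min continuous_const⟩ with hg
    have hgmem : g ∈ AA (K₁ ∪ K₂) := by
      constructor
      · intro x
        exact ⟨le_min (add_nonneg (AAbounds hf₁ x).1 (AAbounds hf₂ x).1) zero_le_one, min_le_right _ _⟩
      · intro x hx
        rcases hx with hx | hx
        · have : (1:ℝ) ≤ f₁ x + f₂ x := by
            have := AAone hf₁ x hx; have := (AAbounds hf₂ x).1; linarith [AAone hf₁ x hx]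
          simpa [hg] using min_eq_right this
        · have : (1:ℝ) ≤ f₁ x + f₂ x := by
            have := AAone hf₂ x hx; have := (AAbounds hf₁ x).1; linarith [AAone hf₂ x hx]
          simpa [hg] using min_eq_right this
    calc lam L (K₁ ∪ K₂) ≤ L g := lam_le L hadd hpos hgmem
    _ ≤ L (f₁ + f₂) := L_mono L hadd hpos (fun x => by simpa [hg] using min_le_left _ _)
    _ = L f₁ + L f₂ := hadd _ _
  -- take infima
  have h1 : ∀ f₁ ∈ AA K₁, lam L (K₁ ∪ K₂) - L f₁ ≤ lam L K₂ := by
    intro f₁ hf₁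
    refine le_lam L hadd hpos (fun f₂ hf₂ => ?_)
    linarith [key f₁ hf₁ f₂ hf₂]
  have h2 : lam L (K₁ ∪ K₂) - lam L K₂ ≤ lam L K₁ := by
    refine le_lam L hadd hpos (fun f₁ hf₁ => ?_)
    linarith [h1 f₁ hf₁]
  linarith

lemma lam_union_disjoint {K₁ K₂ : Set X} (hK₁ : IsCompact K₁) (hK₂ : IsCompact K₂)
    (hd : Disjoint K₁ K₂) :
    lam L (K₁ ∪ K₂) = lam L K₁ + lam L K₂ := by
  refine le_antisymm (lam_union_le L hadd hpos K₁ K₂) ?_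
  obtain ⟨u, hu0, hu1, hu01⟩ :=
    exists_continuous_zero_one_of_isCompact hK₂ hK₁.isClosed hd.symm
  refine le_lam L hadd hpos (fun f hf => ?_)
  have h1 : f * u ∈ AA K₁ := by
    constructor
    · intro x
      exact ⟨mul_nonneg (AAbounds hf x).1 (hu01 x).1,
        mul_le_one₀ (AAbounds hf x).2 (hu01 x).1 (hu01 x).2⟩
    · intro x hx
      have : u x = 1 := hu1 hx
      simp [ContinuousMap.mul_apply, this, AAone hf x (Or.inl hx)]
  have h2 : f * (1 - u) ∈ AA K₂ := by
    constructor
    · intro x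
      refine ⟨mul_nonneg (AAbounds hf x).1 (by simpa using (hu01 x).2), ?_⟩
      have := (hu01 x).1
      calc f x * (1 - u x) ≤ 1 * (1 - u x) :=
            mul_le_mul_of_nonneg_right (AAbounds hf x).2 (by linarith [(hu01 x).2])
      _ ≤ 1 := by linarith
    · intro x hx
      have : u x = 0 := hu0 hx
      simp [ContinuousMap.mul_apply, this, AAone hf x (Or.inr hx)]
  have hsum : f * u + f * (1 - u) = f := by
    ext x; simp [ContinuousMap.mul_apply]; ring
  have : L (f * u) + L (f * (1 - u)) = L f := by
    rw [← hadd]; rw [hsum]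
  calc lam L K₁ + lam L K₂ ≤ L (f * u) + L (f * (1 - u)) :=
        add_le_add (lam_le L hadd hpos h1) (lam_le L hadd hpos h2)
  _ = L f := this

end lemmas
end Riesz

section RieszMeasure

variable {X : Type*} [TopologicalSpace X] [CompactSpace X] [T2Space X]
  [MeasurableSpace X] [BorelSpace X]
variable (L : C(X, ℝ) → ℝ)

/-- The content associated to a positive linear functional. -/
def rContent (hadd : ∀ f g, L (f + g) = L f + L g)
    (hpos : ∀ f : C(X, ℝ), (∀ x, 0 ≤ f x) → 0 ≤ L f) : Content X where
  toFun K := Real.toNNReal (lam L K)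
  mono' K₁ K₂ h := Real.toNNReal_mono (lam_mono L hadd hpos h)
  sup_disjoint' K₁ K₂ hd _ _ := by
    have h := lam_union_disjoint L hadd hpos K₁.2 K₂.2 hd
    simp only [TopologicalSpace.Compacts.coe_sup]
    rw [show ((K₁ : Set X) ∪ (K₂ : Set X)) = K₁.carrier ∪ K₂.carrier from rfl, h,
      Real.toNNReal_add (lam_nonneg L hadd hpos _) (lam_nonneg L hadd hpos _)]
    rfl
  sup_le' K₁ K₂ := by
    simp only [TopologicalSpace.Compacts.coe_sup]
    rw [← Real.toNNReal_add (lam_nonneg L hadd hpos _) (lam_nonneg L hadd hpos _)]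
    exact Real.toNNReal_mono (lam_union_le L hadd hpos _ _)

variable (hadd : ∀ f g, L (f + g) = L f + L g)
    (hsmul : ∀ (c : ℝ) (f : C(X, ℝ)), L (c • f) = c * L f)
    (hpos : ∀ f : C(X, ℝ), (∀ x, 0 ≤ f x) → 0 ≤ L f)

/-- The measure associated to a positive linear functional. -/
def rMu : Measure X := (rContent L hadd hpos).measure

lemma rMu_fin : IsFiniteMeasure (rMu L hadd hpos) := by
  constructor
  rw [rMu, Content.measure_apply _ MeasurableSet.univ,
    Content.outerMeasure_of_isOpen _ univ isOpen_univ]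
  exact lt_of_le_of_lt
    (Content.innerContent_le _ ⟨univ, isOpen_univ⟩ ⟨univ, isCompact_univ⟩ subset_rfl)
    (Content.lt_top _ _)

lemma rContent_coe (K : TopologicalSpace.Compacts X) :
    ((rContent L hadd hpos).toFun K : ENNReal) = ENNReal.ofReal (lam L (K : Set X)) := rfl

lemma L_le_measure {K : Set X} (hK : IsClosed K) {g : C(X, ℝ)}
    (hg1 : ∀ x, g x ∈ Icc (0:ℝ) 1) (hg0 : ∀ x ∉ K, g x = 0) :
    L g ≤ ((rMu L hadd hpos) K).toReal := by
  have hKc : IsCompact K := hK.isCompact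
  have step1 : L g ≤ lam L K := by
    refine le_lam L hadd hpos (fun f hf => ?_)
    refine L_mono L hadd hpos (fun x => ?_)
    by_cases hx : x ∈ K
    · rw [AAone hf x hx]; exact (hg1 x).2
    · rw [hg0 x hx]; exact (AAbounds hf x).1
  have step2 : ENNReal.ofReal (lam L K) ≤ (rMu L hadd hpos) K := by
    rw [rMu, Content.measure_apply _ hK.measurableSet]
    exact Content.le_outerMeasure_compacts _ ⟨K, hKc⟩
  haveI := rMu_fin L hadd hpos
  calc L g ≤ lam L K := step1
  _ = (ENNReal.ofReal (lam L K)).toReal := by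
      rw [ENNReal.toReal_ofReal (lam_nonneg L hadd hpos K)]
  _ ≤ ((rMu L hadd hpos) K).toReal :=
      ENNReal.toReal_mono (measure_ne_top _ _) step2

include hsmul in
lemma measure_le_L {K : Set X} (hK : IsCompact K) {f : C(X, ℝ)} (hf : f ∈ AA K) :
    ((rMu L hadd hpos) K).toReal ≤ L f := by
  haveI := rMu_fin L hadd hpos
  have hf0 : 0 ≤ L f := hpos f (fun x => (AAbounds hf x).1)
  have step : ∀ δ : ℝ, 0 < δ → δ < 1 →
      ((rMu L hadd hpos) K).toReal ≤ (1 - δ)⁻¹ * L f := by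
    intro δ hδ0 hδ1
    have hδ : (0:ℝ) < 1 - δ := by linarith
    set U : Set X := {x | 1 - δ < f x} with hU
    have hUo : IsOpen U := isOpen_lt continuous_const f.continuous
    have hKU : K ⊆ U := fun x hx => by
      simp only [hU, mem_setOf_eq, AAone hf x hx]; linarith
    have hb : (rMu L hadd hpos) K ≤ ENNReal.ofReal ((1 - δ)⁻¹ * L f) := by
      calc (rMu L hadd hpos) K ≤ (rMu L hadd hpos) U := measure_mono hKU
      _ = (rContent L hadd hpos).outerMeasure U := by
          rw [rMu, Content.measure_apply _ hUo.measurableSet]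
      _ = (rContent L hadd hpos).innerContent ⟨U, hUo⟩ :=
          Content.outerMeasure_of_isOpen _ U hUo
      _ ≤ ENNReal.ofReal ((1 - δ)⁻¹ * L f) := by
          refine iSup₂_le (fun K' hK' => ?_)
          show ((rContent L hadd hpos).toFun K' : ENNReal) ≤ _
          rw [rContent_coe]
          refine ENNReal.ofReal_le_ofReal ?_
          set g : C(X, ℝ) := ⟨fun x => min ((1 - δ)⁻¹ * f x) 1,
            (continuous_const.mul f.continuous).min continuous_const⟩ with hg
          have hgmem : g ∈ AA (K' : Set X) := by
            constructor
            · intro x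
              exact ⟨le_min (mul_nonneg (by positivity) (AAbounds hf x).1) zero_le_one,
                min_le_right _ _⟩
            · intro x hx
              have hfx : 1 - δ < f x := hK' hx
              have : (1:ℝ) ≤ (1 - δ)⁻¹ * f x := by
                have h := mul_le_mul_of_nonneg_left hfx.le (le_of_lt (inv_pos.2 hδ))
                rwa [inv_mul_cancel₀ (ne_of_gt hδ)] at h
              simpa [hg] using min_eq_right this
          calc lam L (K' : Set X) ≤ L g := lam_le L hadd hpos hgmem
          _ ≤ L ((1 - δ)⁻¹ • f) := by
              refine L_mono L hadd hpos (fun x => ?_)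
              simpa [hg] using min_le_left _ _
          _ = (1 - δ)⁻¹ * L f := hsmul _ _
    exact ENNReal.toReal_le_of_le_ofReal (by positivity) hb
  -- pass to the limit δ → 0
  set Mr := ((rMu L hadd hpos) K).toReal with hMr
  by_contra hcon
  push_neg at hcon
  have hM0 : 0 < Mr := lt_of_le_of_lt hf0 hcon
  set δ := (Mr - L f) / (2 * Mr) with hδdef
  have hδ0 : 0 < δ := by apply div_pos; linarith; linarith
  have hδ1 : δ < 1 := by
    rw [hδdef, div_lt_one (by linarith)]; linarith
  have h1 : Mr ≤ (1 - δ)⁻¹ * L f := step δ hδ0 hδ1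
  have h2 : Mr * (1 - δ) ≤ L f := by
    have hδ' : (0:ℝ) < 1 - δ := by linarith
    rw [inv_mul_eq_div] at h1
    exact (le_div_iff₀ hδ').1 h1
  have h3 : Mr * (1 - δ) = Mr - (Mr - L f) / 2 := by
    rw [hδdef, mul_sub, mul_one, mul_div_assoc', mul_comm 2 Mr, mul_div_mul_left _ _ hM0.ne']
  rw [h3] at h2
  linarith

end RieszMeasure

lemma sum_clamp (N : ℕ) (a : ℝ) (h0 : 0 ≤ a) (hN : a ≤ N) :
    ∑ i ∈ Finset.range N, min (max (a - i) 0) 1 = a := by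
  induction N with
  | zero =>
    simp only [Finset.range_zero, Finset.sum_empty]
    simp only [Nat.cast_zero] at hN
    linarith
  | succ N ih =>
    rw [Finset.sum_range_succ]
    rcases le_or_gt a N with h | h
    · rw [ih h]
      have h1 : a - N ≤ 0 := by linarith
      rw [max_eq_right h1, min_eq_left zero_le_one, add_zero]
    · have hterm : ∀ i ∈ Finset.range N, min (max (a - i) 0) 1 = 1 := by
        intro i hi
        have hi' : i < N := Finset.mem_range.1 hi
        have hi'' : (i:ℝ) ≤ (N:ℝ) - 1 := by
          have : (i:ℝ) + 1 ≤ (N:ℝ) := by exact_mod_cast hi'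
          linarith
        have h1 : 1 ≤ a - i := by linarith
        rw [max_eq_left (by linarith), min_eq_right h1]
      rw [Finset.sum_congr rfl hterm, Finset.sum_const, Finset.card_range, nsmul_eq_mul, mul_one]
      have hN' : a ≤ (N:ℝ) + 1 := by push_cast at hN; linarith
      rw [max_eq_left (by linarith), min_eq_left (by linarith)]
      ring

section Sandwich
variable {X : Type*} [TopologicalSpace X] [CompactSpace X] [T2Space X]
  [MeasurableSpace X] [BorelSpace X]
variable (L : C(X, ℝ) → ℝ)
variable (hadd : ∀ f g, L (f + g) = L f + L g)
    (hsmul : ∀ (c : ℝ) (f : C(X, ℝ)), L (c • f) = c * L f)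
    (hpos : ∀ f : C(X, ℝ), (∀ x, 0 ≤ f x) → 0 ≤ L f)

lemma cont_integrable (μ : Measure X) [IsFiniteMeasure μ] {g : X → ℝ} (hg : Continuous g) :
    Integrable g μ :=
  hg.integrable_of_hasCompactSupport
    (IsCompact.of_isClosed_subset isCompact_univ (isClosed_tsupport g) (subset_univ _))

include hadd hpos in
lemma L_finset_sum {ι : Type*} (s : Finset ι) (h : ι → C(X, ℝ)) :
    L (∑ i ∈ s, h i) = ∑ i ∈ s, L (h i) := by
  classical
  induction s using Finset.induction_on with
  | empty => simpa using L_zero L hadd hpos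
  | insert _ _ hnot ih => rw [Finset.sum_insert hnot, Finset.sum_insert hnot, hadd, ih]

include hadd hsmul hpos in
theorem integral_rMu_of_Icc (g : C(X, ℝ)) (hg : ∀ x, g x ∈ Icc (0:ℝ) 1) :
    ∫ x, g x ∂(rMu L hadd hpos) = L g := by
  set μ := rMu L hadd hpos with hμ
  haveI : IsFiniteMeasure μ := rMu_fin L hadd hpos
  set M := (μ univ).toReal with hM
  have hM0 : 0 ≤ M := ENNReal.toReal_nonneg
  have key : ∀ N : ℕ, 1 ≤ N → |(∫ x, g x ∂μ) - L g| ≤ M / N := by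
    intro N hN
    have hNpos : (0:ℝ) < N := by exact_mod_cast hN
    set Ks : ℕ → Set X := fun i => {x | (i:ℝ)/N ≤ g x} with hKs
    have hKclosed : ∀ i, IsClosed (Ks i) := fun i =>
      isClosed_le continuous_const g.continuous
    have hKcpt : ∀ i, IsCompact (Ks i) := fun i => (hKclosed i).isCompact
    set fi : ℕ → C(X, ℝ) := fun i => ⟨fun x => min (max ((N:ℝ) * g x - i) 0) 1,
      (((continuous_const.mul g.continuous).sub continuous_const).max
        continuous_const).min continuous_const⟩ with hfi
    have hfi01 : ∀ i x, fi i x ∈ Icc (0:ℝ) 1 := fun i x =>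
      ⟨le_min (le_max_right _ _) zero_le_one, min_le_right _ _⟩
    have hfi_one : ∀ i, ∀ x ∈ Ks (i+1), fi i x = 1 := by
      intro i x hx
      have hx' : ((i:ℝ)+1)/N ≤ g x := by
        have := hx
        simp only [hKs, mem_setOf_eq, Nat.cast_add, Nat.cast_one] at this
        exact this
      have h1 : 1 ≤ (N:ℝ) * g x - i := by
        have := (div_le_iff₀ hNpos).1 hx'
        nlinarith
      show min (max ((N:ℝ) * g x - i) 0) 1 = 1
      rw [max_eq_left (by linarith), min_eq_right h1]
    have hfi_zero : ∀ i, ∀ x ∉ Ks i, fi i x = 0 := by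
      intro i x hx
      have hx' : g x < (i:ℝ)/N := not_le.1 hx
      have h1 : (N:ℝ) * g x - i ≤ 0 := by
        have := (lt_div_iff₀ hNpos).1 hx'
        nlinarith
      show min (max ((N:ℝ) * g x - i) 0) 1 = 0
      rw [max_eq_right h1, min_eq_left zero_le_one]
    have hsum : ∀ x, ∑ i ∈ Finset.range N, fi i x = N * g x := by
      intro x
      have h0 : 0 ≤ (N:ℝ) * g x := mul_nonneg hNpos.le (hg x).1
      have h1 : (N:ℝ) * g x ≤ N := by nlinarith [(hg x).2]
      simpa [hfi] using sum_clamp N ((N:ℝ) * g x) h0 h1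
    set A : ℕ → ℝ := fun i => (μ (Ks i)).toReal with hA
    have hAnonneg : ∀ i, 0 ≤ A i := fun i => ENNReal.toReal_nonneg
    have hA0 : A 0 ≤ M :=
      ENNReal.toReal_mono (measure_ne_top μ univ) (measure_mono (subset_univ _))
    have hind : ∀ i, Integrable ((Ks i).indicator (fun _ => (1:ℝ))) μ := fun i =>
      (integrable_const 1).indicator (hKclosed i).measurableSet
    have hint_ind : ∀ i, ∫ x, (Ks i).indicator (fun _ => (1:ℝ)) x ∂μ = A i := by
      intro i
      rw [integral_indicator_const (1:ℝ) (hKclosed i).measurableSet]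
      simp [hA]; rfl
    have hgint : Integrable (fun x => g x) μ := cont_integrable μ g.continuous
    have int_lower : ∑ i ∈ Finset.range N, A (i+1) ≤ N * ∫ x, g x ∂μ := by
      calc ∑ i ∈ Finset.range N, A (i+1)
          = ∫ x, ∑ i ∈ Finset.range N, (Ks (i+1)).indicator (fun _ => (1:ℝ)) x ∂μ := by
            rw [integral_finset_sum _ (fun i _ => hind (i+1))]
            exact (Finset.sum_congr rfl (fun i _ => (hint_ind (i+1)).symm))
      _ ≤ ∫ x, (N:ℝ) * g x ∂μ := by
            refine integral_mono (integrable_finset_sum _ (fun i _ => hind (i+1)))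
              (hgint.const_mul _) (fun x => ?_)
            rw [← hsum x]
            refine Finset.sum_le_sum (fun i _ => ?_)
            by_cases hx : x ∈ Ks (i+1)
            · rw [indicator_of_mem hx, hfi_one i x hx]
            · rw [indicator_of_notMem hx]; exact (hfi01 i x).1
      _ = N * ∫ x, g x ∂μ := by rw [integral_const_mul]
    have int_upper : N * ∫ x, g x ∂μ ≤ ∑ i ∈ Finset.range N, A i := by
      calc N * ∫ x, g x ∂μ = ∫ x, (N:ℝ) * g x ∂μ := by rw [integral_const_mul]
      _ ≤ ∫ x, ∑ i ∈ Finset.range N, (Ks i).indicator (fun _ => (1:ℝ)) x ∂μ := by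
            refine integral_mono (hgint.const_mul _)
              (integrable_finset_sum _ (fun i _ => hind i)) (fun x => ?_)
            rw [← hsum x]
            refine Finset.sum_le_sum (fun i hi => ?_)
            by_cases hx : x ∈ Ks i
            · rw [indicator_of_mem hx]; exact (hfi01 i x).2
            · rw [indicator_of_notMem hx, hfi_zero i x hx]
      _ = ∑ i ∈ Finset.range N, A i := by
            rw [integral_finset_sum _ (fun i _ => hind i)]
            exact Finset.sum_congr rfl (fun i _ => hint_ind i)
    have L_eq : (N:ℝ) * L g = ∑ i ∈ Finset.range N, L (fi i) := by
      rw [← L_finset_sum L hadd hpos, ← hsmul (N:ℝ) g]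
      congr 1
      ext x
      simp only [ContinuousMap.smul_apply, ContinuousMap.coe_sum, Finset.sum_apply,
        smul_eq_mul]
      exact (hsum x).symm
    have L_lower : ∀ i, A (i+1) ≤ L (fi i) := fun i =>
      measure_le_L L hadd hsmul hpos (hKcpt (i+1)) ⟨hfi01 i, hfi_one i⟩
    have L_upper : ∀ i, L (fi i) ≤ A i := fun i =>
      L_le_measure L hadd hpos (hKclosed i) (hfi01 i) (hfi_zero i)
    have t1 : ∑ i ∈ Finset.range N, A (i+1) ≤ N * L g := by
      rw [L_eq]; exact Finset.sum_le_sum (fun i _ => L_lower i)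
    have t2 : (N:ℝ) * L g ≤ ∑ i ∈ Finset.range N, A i := by
      rw [L_eq]; exact Finset.sum_le_sum (fun i _ => L_upper i)
    have tele : ∑ i ∈ Finset.range N, A i - ∑ i ∈ Finset.range N, A (i+1) = A 0 - A N := by
      rw [← Finset.sum_sub_distrib]
      exact Finset.sum_range_sub' A N
    have habs : |(∫ x, g x ∂μ) - L g| * N ≤ M := by
      have h1 : ((∫ x, g x ∂μ) - L g) * N ≤ M := by nlinarith [hAnonneg N]
      have h2 : -(((∫ x, g x ∂μ) - L g) * N) ≤ M := by nlinarith [hAnonneg N]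
      have := abs_le.2 ⟨by linarith, h1⟩
      calc |(∫ x, g x ∂μ) - L g| * N = |((∫ x, g x ∂μ) - L g) * N| := by
            rw [abs_mul, abs_of_nonneg hNpos.le]
      _ ≤ M := abs_le.2 ⟨by linarith, h1⟩
    rw [le_div_iff₀ hNpos]
    exact habs
  have habs0 : |(∫ x, g x ∂μ) - L g| ≤ 0 := by
    refine le_of_forall_pos_le_add (fun ε hε => ?_)
    obtain ⟨N, hNgt⟩ := exists_nat_gt (M / ε)
    have hN1 : 1 ≤ N := by
      by_contra h
      push_neg at h
      interval_cases N
      simp only [Nat.cast_zero] at hNgt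
      have : (0:ℝ) ≤ M / ε := div_nonneg hM0 hε.le
      linarith
    have h1 := key N hN1
    have hNpos : (0:ℝ) < N := by exact_mod_cast hN1
    have h2 : M / N < ε := by
      rw [div_lt_iff₀ hNpos]
      have := (div_lt_iff₀ hε).1 hNgt
      linarith
    linarith
  have : (∫ x, g x ∂μ) - L g = 0 := by
    have := le_antisymm habs0 (abs_nonneg _)
    exact abs_eq_zero.1 this
  linarith

include hadd hsmul hpos in
/-- Riesz–Markov–Kakutani representation for a compact Hausdorff space. -/
theorem riesz_repr : ∀ g : C(X, ℝ), ∫ x, g x ∂(rMu L hadd hpos) = L g := by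
  intro g
  set μ := rMu L hadd hpos with hμ
  haveI : IsFiniteMeasure μ := rMu_fin L hadd hpos
  set M := (μ univ).toReal with hM
  have hone : ∫ x, (1:ℝ) ∂μ = L 1 := by
    simpa using integral_rMu_of_Icc L hadd hsmul hpos 1
      (fun x => ⟨zero_le_one, le_refl 1⟩)
  have hMeq : M = L 1 := by
    rw [← hone, integral_const, measureReal_def, smul_eq_mul, mul_one]
  set s : ℝ := ‖g‖ + 1 with hs
  have hspos : (0:ℝ) < s := by positivity
  have hb : ∀ x, |g x| ≤ ‖g‖ := fun x => by
    simpa using g.norm_coe_le_norm x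
  set g' : C(X, ℝ) := (2*s)⁻¹ • (g + ContinuousMap.const X s) with hg'
  have hg'mem : ∀ x, g' x ∈ Icc (0:ℝ) 1 := by
    intro x
    have h1 := abs_le.1 (hb x)
    constructor
    · simp only [hg', ContinuousMap.smul_apply, ContinuousMap.add_apply,
        ContinuousMap.const_apply, smul_eq_mul]
      have : 0 ≤ g x + s := by simp only [hs]; linarith [h1.1]
      positivity
    · simp only [hg', ContinuousMap.smul_apply, ContinuousMap.add_apply,
        ContinuousMap.const_apply, smul_eq_mul]
      rw [inv_mul_le_iff₀ (by positivity), mul_one]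
      simp only [hs]; linarith [h1.2]
  have hmain := integral_rMu_of_Icc L hadd hsmul hpos g' hg'mem
  have hconst : (ContinuousMap.const X s) = s • (1 : C(X, ℝ)) := by
    ext x; simp
  have hLg' : L g' = (2*s)⁻¹ * (L g + s * L 1) := by
    rw [hg', hsmul, hadd, hconst, hsmul]
  have hInt : ∫ x, g' x ∂μ = (2*s)⁻¹ * ((∫ x, g x ∂μ) + s * M) := by
    have hgi : Integrable (fun x => g x) μ := cont_integrable μ g.continuous
    simp only [hg', ContinuousMap.smul_apply, ContinuousMap.add_apply,
      ContinuousMap.const_apply, smul_eq_mul]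
    rw [integral_const_mul, integral_add hgi (integrable_const s), integral_const, measureReal_def,
      smul_eq_mul, mul_comm ((μ univ).toReal) s]
  have h2s : ((2*s)⁻¹ : ℝ) ≠ 0 := by positivity
  have : (∫ x, g x ∂μ) + s * M = L g + s * L 1 := by
    have := hmain
    rw [hInt, hLg'] at this
    exact mul_left_cancel₀ h2s this
  rw [hMeq] at this
  linarith

end Sandwich

section SeqCompact
open Filter
variable {Y : Type*} [MetricSpace Y] [CompactSpace Y] [SecondCountableTopology Y]
  [MeasurableSpace Y] [BorelSpace Y]

theorem exists_subseq_tendsto_integral (μs : ℕ → Measure Y) (C : ℝ) (hC0 : 0 ≤ C)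
    (hmass : ∀ k, μs k univ ≤ ENNReal.ofReal C) :
    ∃ φ : ℕ → ℕ, StrictMono φ ∧ ∃ μ : Measure Y, IsFiniteMeasure μ ∧
      ∀ g : C(Y, ℝ), Tendsto (fun k => ∫ x, g x ∂(μs (φ k))) atTop (𝓝 (∫ x, g x ∂μ)) := by
  have hfin : ∀ k, IsFiniteMeasure (μs k) := fun k =>
    ⟨lt_of_le_of_lt (hmass k) ENNReal.ofReal_lt_top⟩
  have hbd : ∀ (k : ℕ) (g : C(Y, ℝ)), |∫ x, g x ∂(μs k)| ≤ ‖g‖ * C := by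
    intro k g
    haveI := hfin k
    have h1 : ‖∫ x, g x ∂(μs k)‖ ≤ ‖g‖ * (μs k univ).toReal :=
      norm_integral_le_of_norm_le_const
        (Eventually.of_forall fun x => g.norm_coe_le_norm x)
    have h2 : (μs k univ).toReal ≤ C := ENNReal.toReal_le_of_le_ofReal hC0 (hmass k)
    calc |∫ x, g x ∂(μs k)| ≤ ‖g‖ * (μs k univ).toReal := h1
    _ ≤ ‖g‖ * C := mul_le_mul_of_nonneg_left h2 (norm_nonneg g)
  obtain ⟨u, hu⟩ := TopologicalSpace.exists_dense_seq C(Y, ℝ)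
  set box : Set (ℕ → ℝ) := univ.pi (fun i => Icc (-(‖u i‖ * C)) (‖u i‖ * C)) with hbox'
  have hboxc : IsCompact box := isCompact_univ_pi (fun i => isCompact_Icc)
  have hFmem : ∀ k, (fun i => ∫ x, (u i) x ∂(μs k)) ∈ box := by
    intro k
    intro i _
    exact ⟨(abs_le.1 (hbd k (u i))).1, (abs_le.1 (hbd k (u i))).2⟩
  obtain ⟨x, -, φ, hφ, hconv⟩ := hboxc.isSeqCompact hFmem
  have hconv' : ∀ i, Tendsto (fun k => ∫ y, (u i) y ∂(μs (φ k))) atTop (𝓝 (x i)) := by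
    intro i
    exact (tendsto_pi_nhds.1 hconv) i
  have hcauchy : ∀ g : C(Y, ℝ), CauchySeq (fun k => ∫ y, g y ∂(μs (φ k))) := by
    intro g
    rw [Metric.cauchySeq_iff]
    intro ε hε
    obtain ⟨i, hi⟩ := hu.exists_dist_lt g (show (0:ℝ) < ε/(4*(C+1)) by positivity)
    have hCau : CauchySeq (fun k => ∫ y, (u i) y ∂(μs (φ k))) := (hconv' i).cauchySeq
    rw [Metric.cauchySeq_iff] at hCau
    obtain ⟨N, hN⟩ := hCau (ε/2) (by positivity)
    refine ⟨N, fun m hm n hn => ?_⟩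
    have key : ∀ k, |(∫ y, g y ∂(μs (φ k))) - ∫ y, (u i) y ∂(μs (φ k))| ≤ ε/4 := by
      intro k
      haveI := hfin (φ k)
      have h3 : |∫ y, (g - u i) y ∂(μs (φ k))| ≤ ‖g - u i‖ * C := hbd (φ k) (g - u i)
      have h4 : ∫ y, (g - u i) y ∂(μs (φ k)) =
          (∫ y, g y ∂(μs (φ k))) - ∫ y, (u i) y ∂(μs (φ k)) := by
        simp only [ContinuousMap.sub_apply]
        exact integral_sub (cont_integrable _ g.continuous)
          (cont_integrable _ (u i).continuous)
      rw [h4] at h3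
      have hnorm : ‖g - u i‖ * C ≤ ε / 4 := by
        have h1 : ‖g - u i‖ = dist g (u i) := (dist_eq_norm _ _).symm
        have h5 : ‖g - u i‖ * C ≤ (ε/(4*(C+1))) * C := by
          apply mul_le_mul_of_nonneg_right _ hC0
          rw [h1]; linarith [hi]
        have h6 : (ε/(4*(C+1))) * C ≤ ε/4 := by
          rw [div_mul_eq_mul_div, div_le_div_iff₀ (by positivity) (by norm_num)]
          nlinarith
        linarith
      linarith
    have hd := hN m hm n hn
    rw [Real.dist_eq] at hd ⊢
    have k1 := key m
    have k2 := key n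
    have t1 := abs_sub_le (∫ y, g y ∂(μs (φ m))) (∫ y, (u i) y ∂(μs (φ m)))
      (∫ y, g y ∂(μs (φ n)))
    have t2 := abs_sub_le (∫ y, (u i) y ∂(μs (φ m))) (∫ y, (u i) y ∂(μs (φ n)))
      (∫ y, g y ∂(μs (φ n)))
    have k2' : |(∫ y, (u i) y ∂(μs (φ n))) - ∫ y, g y ∂(μs (φ n))| ≤ ε/4 := by
      rw [abs_sub_comm]; exact k2
    linarith
  set L : C(Y, ℝ) → ℝ := fun g => limUnder atTop (fun k => ∫ y, g y ∂(μs (φ k))) with hL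
  have hLten : ∀ g, Tendsto (fun k => ∫ y, g y ∂(μs (φ k))) atTop (𝓝 (L g)) :=
    fun g => (hcauchy g).tendsto_limUnder
  have hadd : ∀ f g, L (f + g) = L f + L g := by
    intro f g
    refine tendsto_nhds_unique (hLten (f + g)) ?_
    have h1 := (hLten f).add (hLten g)
    refine Tendsto.congr (fun k => ?_) h1
    haveI := hfin (φ k)
    simp only [ContinuousMap.add_apply]
    exact (integral_add (cont_integrable _ f.continuous)
      (cont_integrable _ g.continuous)).symm
  have hsmul : ∀ (c : ℝ) (f : C(Y, ℝ)), L (c • f) = c * L f := by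
    intro c f
    refine tendsto_nhds_unique (hLten (c • f)) ?_
    have h1 := (hLten f).const_mul c
    refine Tendsto.congr (fun k => ?_) h1
    simp only [ContinuousMap.smul_apply, smul_eq_mul]
    exact (integral_const_mul c _).symm
  have hpos : ∀ f : C(Y, ℝ), (∀ y, 0 ≤ f y) → 0 ≤ L f := by
    intro f hf
    exact ge_of_tendsto' (hLten f) (fun k => integral_nonneg hf)
  refine ⟨φ, hφ, rMu L hadd hpos, rMu_fin L hadd hpos, fun g => ?_⟩
  rw [riesz_repr L hadd hsmul hpos g]
  exact hLten g

end SeqCompact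

section Restrict
open Filter

theorem exists_subseq_tendsto_integral_of_support {E : Type*} [MetricSpace E]
    [SecondCountableTopology E] [MeasurableSpace E] [BorelSpace E] {S : Set E}
    (hS : IsCompact S) (μs : ℕ → Measure E) (C : ℝ) (hC0 : 0 ≤ C)
    (hmass : ∀ k, μs k univ ≤ ENNReal.ofReal C) (hsupp : ∀ k, μs k Sᶜ = 0) :
    ∃ φ : ℕ → ℕ, StrictMono φ ∧ ∃ μ : Measure E, IsFiniteMeasure μ ∧ μ Sᶜ = 0 ∧
      ∀ g : E → ℝ, Continuous g →
        Tendsto (fun k => ∫ x, g x ∂(μs (φ k))) atTop (𝓝 (∫ x, g x ∂μ)) := by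
  haveI : CompactSpace ↥S := isCompact_iff_compactSpace.1 hS
  have hSm : MeasurableSet S := hS.isClosed.measurableSet
  have emb : MeasurableEmbedding (Subtype.val : ↥S → E) :=
    MeasurableEmbedding.subtype_coe hSm
  set μ' : ℕ → Measure ↥S := fun k => Measure.comap Subtype.val (μs k) with hμ'
  have hmap : ∀ k, Measure.map Subtype.val (μ' k) = μs k := by
    intro k
    rw [hμ', emb.map_comap, Subtype.range_coe]
    refine Measure.restrict_eq_self_of_ae_mem ?_
    rw [Filter.eventually_iff, mem_ae_iff]
    simpa using hsupp k
  have hmass' : ∀ k, μ' k univ ≤ ENNReal.ofReal C := by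
    intro k
    rw [hμ', emb.comap_apply, image_univ, Subtype.range_coe]
    exact le_trans (measure_mono (subset_univ _)) (hmass k)
  obtain ⟨φ, hφ, μ'', hfin'', hconv''⟩ :=
    exists_subseq_tendsto_integral μ' C hC0 hmass'
  refine ⟨φ, hφ, Measure.map Subtype.val μ'', ?_, ?_, ?_⟩
  · exact ⟨by
      rw [Measure.map_apply measurable_subtype_coe MeasurableSet.univ]
      exact measure_lt_top _ _⟩
  · rw [Measure.map_apply measurable_subtype_coe hSm.compl]
    have : (Subtype.val : ↥S → E) ⁻¹' Sᶜ = ∅ := by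
      ext x; simp [x.2]
    rw [this, measure_empty]
  · intro g hg
    set G : C(↥S, ℝ) := ⟨fun y => g y.val, hg.comp continuous_subtype_val⟩ with hG
    have e1 : ∀ k, ∫ x, g x ∂(μs (φ k)) = ∫ y, G y ∂(μ' (φ k)) := by
      intro k
      rw [← hmap (φ k),
        integral_map measurable_subtype_coe.aemeasurable hg.aestronglyMeasurable]
      rfl
    have e2 : ∫ x, g x ∂(Measure.map Subtype.val μ'') = ∫ y, G y ∂μ'' := by
      rw [integral_map measurable_subtype_coe.aemeasurable hg.aestronglyMeasurable]
      rfl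
    rw [e2]
    exact Tendsto.congr (fun k => (e1 k).symm) (hconv'' G)

end Restrict

open Filter in
theorem stmt2' (n m : ℕ) (T : ℝ) (hT : 0 < T) (x0 : Fin n → ℝ)
    (Xs K : Set (Fin n → ℝ)) (Us : Set (Fin m → ℝ))
    (hX : IsCompact Xs) (hK : IsCompact K) (hU : IsCompact Us)
    (f : ℝ × (Fin n → ℝ) × (Fin m → ℝ) → (Fin n → ℝ)) (hf : Continuous f)
    (μs : ℕ → Measure (ℝ × (Fin n → ℝ) × (Fin m → ℝ))) (νs : ℕ → Measure (Fin n → ℝ))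
    (hfeas : ∀ k, (IsFiniteMeasure (μs k) ∧ IsFiniteMeasure (νs k) ∧
      μs k ((Icc 0 T ×ˢ Xs ×ˢ Us)ᶜ) = 0 ∧ νs k Kᶜ = 0 ∧
      ∀ g : ℝ × (Fin n → ℝ) → ℝ, ContDiff ℝ 1 g →
        (∫ ξ, g (T, ξ) ∂(νs k)) - (∫ p, fderiv ℝ g (p.1, p.2.1) (1, f p) ∂(μs k))
          = g (0, x0))) :
    ∃ φ : ℕ → ℕ, StrictMono φ ∧
      ∃ (μ : Measure (ℝ × (Fin n → ℝ) × (Fin m → ℝ))) (ν : Measure (Fin n → ℝ)),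
        (IsFiniteMeasure μ ∧ IsFiniteMeasure ν ∧
        μ ((Icc 0 T ×ˢ Xs ×ˢ Us)ᶜ) = 0 ∧ ν Kᶜ = 0 ∧
        ∀ g : ℝ × (Fin n → ℝ) → ℝ, ContDiff ℝ 1 g →
          (∫ ξ, g (T, ξ) ∂ν) - (∫ p, fderiv ℝ g (p.1, p.2.1) (1, f p) ∂μ) = g (0, x0)) ∧
        (∀ g : ℝ × (Fin n → ℝ) × (Fin m → ℝ) → ℝ, Continuous g →
          Tendsto (fun k => ∫ p, g p ∂(μs (φ k))) atTop (nhds (∫ p, g p ∂μ))) ∧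
        (∀ g : (Fin n → ℝ) → ℝ, Continuous g →
          Tendsto (fun k => ∫ ξ, g ξ ∂(νs (φ k))) atTop (nhds (∫ ξ, g ξ ∂ν))) := by
  classical
  -- mass identities
  have hνmass : ∀ k, νs k univ = ENNReal.ofReal 1 := by
    intro k
    obtain ⟨hμf, hνf, -, -, hcon⟩ := hfeas k
    have h1 := hcon (fun _ => (1:ℝ)) contDiff_const
    simp only [fderiv_fun_const] at h1
    simp only [Pi.zero_apply, ContinuousLinearMap.zero_apply, integral_zero, sub_zero,
      integral_const, measureReal_def, smul_eq_mul, mul_one] at h1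
    rw [← h1, ENNReal.ofReal_toReal (measure_ne_top _ _)]
  have hμmass : ∀ k, μs k univ = ENNReal.ofReal T := by
    intro k
    obtain ⟨hμf, hνf, -, -, hcon⟩ := hfeas k
    have h1 := hcon Prod.fst contDiff_fst
    have h2 : ∀ p : ℝ × (Fin n → ℝ) × (Fin m → ℝ),
        fderiv ℝ (Prod.fst : ℝ × (Fin n → ℝ) → ℝ) (p.1, p.2.1) (1, f p) = 1 := by
      intro p; rw [hasFDerivAt_fst.fderiv]; simp
    simp only [h2] at h1
    simp only [integral_const, measureReal_def, smul_eq_mul, mul_one] at h1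
    have h3 := hνmass k
    have h4 : (νs k univ).toReal = 1 := by rw [h3, ENNReal.toReal_ofReal zero_le_one]
    rw [h4] at h1
    have h5 : (μs k univ).toReal = T := by linarith
    rw [← h5, ENNReal.ofReal_toReal (measure_ne_top _ _)]
  set Sset : Set (ℝ × (Fin n → ℝ) × (Fin m → ℝ)) := Icc 0 T ×ˢ Xs ×ˢ Us with hSset
  have hScomp : IsCompact Sset := isCompact_Icc.prod (hX.prod hU)
  obtain ⟨φ₁, hφ₁, μE, hμfin, hμsupp, hμconv⟩ :=
    exists_subseq_tendsto_integral_of_support hScomp μs T hT.le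
      (fun k => le_of_eq (hμmass k)) (fun k => (hfeas k).2.2.1)
  obtain ⟨φ₂, hφ₂, νE, hνfin, hνsupp, hνconv⟩ :=
    exists_subseq_tendsto_integral_of_support hK (fun k => νs (φ₁ k)) 1 zero_le_one
      (fun k => le_of_eq (hνmass (φ₁ k))) (fun k => (hfeas (φ₁ k)).2.2.2.1)
  refine ⟨φ₁ ∘ φ₂, hφ₁.comp hφ₂, μE, νE, ?_⟩
  have hμconv' : ∀ g : ℝ × (Fin n → ℝ) × (Fin m → ℝ) → ℝ, Continuous g →
      Tendsto (fun k => ∫ p, g p ∂(μs (φ₁ (φ₂ k)))) atTop (𝓝 (∫ p, g p ∂μE)) :=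
    fun g hg => (hμconv g hg).comp hφ₂.tendsto_atTop
  refine ⟨⟨hμfin, hνfin, hμsupp, hνsupp, ?_⟩, hμconv', hνconv⟩
  intro g hg
  have hΦ : Continuous (fun p : ℝ × (Fin n → ℝ) × (Fin m → ℝ) =>
      fderiv ℝ g (p.1, p.2.1) (1, f p)) := by
    have h1 : Continuous (fderiv ℝ g) := hg.continuous_fderiv one_ne_zero
    have h2 : Continuous (fun p : ℝ × (Fin n → ℝ) × (Fin m → ℝ) => (p.1, p.2.1)) :=
      continuous_fst.prodMk (continuous_fst.comp continuous_snd)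
    exact (h1.comp h2).clm_apply (continuous_const.prodMk hf)
  have hψ : Continuous (fun ξ : Fin n → ℝ => g (T, ξ)) :=
    hg.continuous.comp (continuous_const.prodMk continuous_id)
  have h1 := hμconv' _ hΦ
  have h2 := hνconv _ hψ
  have h3 := h2.sub h1
  have h4 : ∀ k, (∫ ξ, g (T, ξ) ∂(νs (φ₁ (φ₂ k)))) -
      (∫ p, fderiv ℝ g (p.1, p.2.1) (1, f p) ∂(μs (φ₁ (φ₂ k)))) = g (0, x0) :=
    fun k => (hfeas (φ₁ (φ₂ k))).2.2.2.2 g hg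
  exact (tendsto_nhds_unique (Tendsto.congr h4 h3) tendsto_const_nhds)



noncomputable section
open MeasureTheory Set

/-- Feasibility for the weak linear program `P`: `(μ, ν)` are finite nonnegative
Borel measures supported on `S = [0,T] × X × U` and on `K` respectively, and
for every `C¹` test function `g : [0,T] × ℝⁿ → ℝ`,
`∫_K g(T,x) dν − ∫_S (∂g/∂t + ⟨∇ₓg, f⟩) dμ = g(0,x0)`; here
`∂g/∂t(t,x) + ⟨∇ₓ g(t,x), f(t,x,u)⟩` is the derivative of `g` at `(t,x)` in the
direction `(1, f(t,x,u))`. -/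
def LPFeasible (n m : ℕ) (T : ℝ) (x0 : Fin n → ℝ)
    (Xs K : Set (Fin n → ℝ)) (Us : Set (Fin m → ℝ))
    (f : ℝ × (Fin n → ℝ) × (Fin m → ℝ) → (Fin n → ℝ))
    (μ : Measure (ℝ × (Fin n → ℝ) × (Fin m → ℝ))) (ν : Measure (Fin n → ℝ)) : Prop :=
  IsFiniteMeasure μ ∧ IsFiniteMeasure ν ∧
  μ ((Icc 0 T ×ˢ Xs ×ˢ Us)ᶜ) = 0 ∧ ν Kᶜ = 0 ∧
  ∀ g : ℝ × (Fin n → ℝ) → ℝ, ContDiff ℝ 1 g →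
    (∫ ξ, g (T, ξ) ∂ν) - (∫ p, fderiv ℝ g (p.1, p.2.1) (1, f p) ∂μ) = g (0, x0)

/-- Cost of a pair of measures: `∫_S h dμ + ∫_K H dν`. -/
def LPCost (n m : ℕ)
    (h : ℝ × (Fin n → ℝ) × (Fin m → ℝ) → ℝ) (H : (Fin n → ℝ) → ℝ)
    (μ : Measure (ℝ × (Fin n → ℝ) × (Fin m → ℝ))) (ν : Measure (Fin n → ℝ)) : ℝ :=
  (∫ p, h p ∂μ) + (∫ ξ, H ξ ∂ν)

open Filter in
/-- the feasible set of the linear program `P` is sequentially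
compact for the topology of weak convergence of measures. -/
theorem stmt2 (n m : ℕ) (T : ℝ) (hT : 0 < T) (x0 : Fin n → ℝ)
    (Xs K : Set (Fin n → ℝ)) (Us : Set (Fin m → ℝ))
    (hX : IsCompact Xs) (hK : IsCompact K) (hU : IsCompact Us)
    (f : ℝ × (Fin n → ℝ) × (Fin m → ℝ) → (Fin n → ℝ)) (hf : Continuous f)
    (μs : ℕ → Measure (ℝ × (Fin n → ℝ) × (Fin m → ℝ))) (νs : ℕ → Measure (Fin n → ℝ))
    (hfeas : ∀ k, LPFeasible n m T x0 Xs K Us f (μs k) (νs k)) :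
    ∃ φ : ℕ → ℕ, StrictMono φ ∧
      ∃ μ ν, LPFeasible n m T x0 Xs K Us f μ ν ∧
        (∀ g : ℝ × (Fin n → ℝ) × (Fin m → ℝ) → ℝ, Continuous g →
          Tendsto (fun k => ∫ p, g p ∂(μs (φ k))) atTop (nhds (∫ p, g p ∂μ))) ∧
        (∀ g : (Fin n → ℝ) → ℝ, Continuous g →
          Tendsto (fun k => ∫ ξ, g ξ ∂(νs (φ k))) atTop (nhds (∫ ξ, g ξ ∂ν))) := by
  unfold LPFeasible at hfeas ⊢
  exact stmt2' n m T hT x0 Xs K Us hX hK hU f hf μs νs hfeas
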